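/- arXiv:2003.04669 — 9 statements merged into one kernel-verified Lean document; each statement's English description precedes it below -/
import Mathlib

section
/- (Proposition 1, CH inequality for biased unsharp measurements.) Let (Λ, μ) be a probability space, let η_a, α_a, η_b, α_b be real numbers, and fix j, k ∈ {+1, −1}. Let p_A : S² × Λ → ℝ and p_B : S² × Λ → ℝ be measurable response functions such that for every measurement direction and every λ ∈ Λ, (1 + j·η_a − |α_a|)/2 ≤ p_A(a, λ) ≤ (1 + j·η_a + |α_a|)/2 and (1 + k·η_b − |α_b|)/2 ≤ p_B(b, λ) ≤ (1 + k·η_b + |α_b|)/2, and all these bounds lie in [0,1]. Define the local-realistic joint distribution P_{jk}(a, b) := ∫_Λ p_A(a, λ) p_B(b, λ) dμ(λ) and marginals P_j(a) := ∫_Λ p_A(a, λ) dμ(λ), P_k(b) := ∫_Λ p_B(b, λ) dμ(λ). Then for all unit vectors a, a', b, b' ∈ ℝ³: P_{jk}(a, b) − P_{jk}(a, b') + P_{jk}(a', b) + P_{jk}(a', b') − (1 + k·η_b)·P_j(a') − (1 + j·η_a)·P_k(b) + ((1 + j·η_a)(1 + k·η_b) − |α_a·α_b|)/2 ≤ 0.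 -/
open scoped RealInnerProductSpace
open MeasureTheory

noncomputable section

lemma ch_pointwise (s t α β A A' B B' : ℝ)
    (hA1 : (s - α)/2 ≤ A) (hA2 : A ≤ (s + α)/2)
    (hA1' : (s - α)/2 ≤ A') (hA2' : A' ≤ (s + α)/2)
    (hB1 : (t - β)/2 ≤ B) (hB2 : B ≤ (t + β)/2)
    (hB1' : (t - β)/2 ≤ B') (hB2' : B' ≤ (t + β)/2) :
    A*B - A*B' + A'*B + A'*B' - t*A' - s*B + (s*t - α*β)/2 ≤ 0 := by
  nlinarith [mul_nonneg (by linarith : (0:ℝ) ≤ A - (s-α)/2) (by linarith : (0:ℝ) ≤ B - (t-β)/2),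
    mul_nonneg (by linarith : (0:ℝ) ≤ A - (s-α)/2) (by linarith : (0:ℝ) ≤ (t+β)/2 - B),
    mul_nonneg (by linarith : (0:ℝ) ≤ (s+α)/2 - A) (by linarith : (0:ℝ) ≤ B - (t-β)/2),
    mul_nonneg (by linarith : (0:ℝ) ≤ (s+α)/2 - A) (by linarith : (0:ℝ) ≤ (t+β)/2 - B),
    mul_nonneg (by linarith : (0:ℝ) ≤ A - (s-α)/2) (by linarith : (0:ℝ) ≤ B' - (t-β)/2),
    mul_nonneg (by linarith : (0:ℝ) ≤ A - (s-α)/2) (by linarith : (0:ℝ) ≤ (t+β)/2 - B'),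
    mul_nonneg (by linarith : (0:ℝ) ≤ (s+α)/2 - A) (by linarith : (0:ℝ) ≤ B' - (t-β)/2),
    mul_nonneg (by linarith : (0:ℝ) ≤ (s+α)/2 - A) (by linarith : (0:ℝ) ≤ (t+β)/2 - B'),
    mul_nonneg (by linarith : (0:ℝ) ≤ A' - (s-α)/2) (by linarith : (0:ℝ) ≤ B - (t-β)/2),
    mul_nonneg (by linarith : (0:ℝ) ≤ A' - (s-α)/2) (by linarith : (0:ℝ) ≤ (t+β)/2 - B),
    mul_nonneg (by linarith : (0:ℝ) ≤ (s+α)/2 - A') (by linarith : (0:ℝ) ≤ B - (t-β)/2),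
    mul_nonneg (by linarith : (0:ℝ) ≤ (s+α)/2 - A') (by linarith : (0:ℝ) ≤ (t+β)/2 - B),
    mul_nonneg (by linarith : (0:ℝ) ≤ A' - (s-α)/2) (by linarith : (0:ℝ) ≤ B' - (t-β)/2),
    mul_nonneg (by linarith : (0:ℝ) ≤ A' - (s-α)/2) (by linarith : (0:ℝ) ≤ (t+β)/2 - B'),
    mul_nonneg (by linarith : (0:ℝ) ≤ (s+α)/2 - A') (by linarith : (0:ℝ) ≤ B' - (t-β)/2),
    mul_nonneg (by linarith : (0:ℝ) ≤ (s+α)/2 - A') (by linarith : (0:ℝ) ≤ (t+β)/2 - B')]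

theorem stmt_4 {Λ : Type*} [MeasurableSpace Λ] (μ : Measure Λ) [IsProbabilityMeasure μ]
    (ηa αa ηb αb : ℝ) (j k : ℝ) (hj : j = 1 ∨ j = -1) (hk : k = 1 ∨ k = -1)
    (pA pB : EuclideanSpace ℝ (Fin 3) → Λ → ℝ)
    (hmA : ∀ a, Measurable (pA a)) (hmB : ∀ b, Measurable (pB b))
    (hA : ∀ a, ‖a‖ = 1 → ∀ x : Λ,
      (1 + j * ηa - |αa|) / 2 ≤ pA a x ∧ pA a x ≤ (1 + j * ηa + |αa|) / 2)
    (hB : ∀ b, ‖b‖ = 1 → ∀ x : Λ,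
      (1 + k * ηb - |αb|) / 2 ≤ pB b x ∧ pB b x ≤ (1 + k * ηb + |αb|) / 2)
    (hA0 : 0 ≤ (1 + j * ηa - |αa|) / 2) (hA1 : (1 + j * ηa + |αa|) / 2 ≤ 1)
    (hB0 : 0 ≤ (1 + k * ηb - |αb|) / 2) (hB1 : (1 + k * ηb + |αb|) / 2 ≤ 1)
    (a a' b b' : EuclideanSpace ℝ (Fin 3))
    (ha : ‖a‖ = 1) (ha' : ‖a'‖ = 1) (hb : ‖b‖ = 1) (hb' : ‖b'‖ = 1) :
    (∫ x, pA a x * pB b x ∂μ) - (∫ x, pA a x * pB b' x ∂μ)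
      + (∫ x, pA a' x * pB b x ∂μ) + (∫ x, pA a' x * pB b' x ∂μ)
      - (1 + k * ηb) * (∫ x, pA a' x ∂μ) - (1 + j * ηa) * (∫ x, pB b x ∂μ)
      + ((1 + j * ηa) * (1 + k * ηb) - |αa * αb|) / 2 ≤ 0 := by
  set s := 1 + j * ηa with hs
  set t := 1 + k * ηb with ht
  -- pointwise bounds in [0,1]
  have bddA : ∀ (c : EuclideanSpace ℝ (Fin 3)), ‖c‖ = 1 → Integrable (pA c) μ := by
    intro c hc
    refine (integrable_const (1:ℝ)).mono' (hmA c).aestronglyMeasurable ?_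
    filter_upwards with x
    have h := hA c hc x
    rw [Real.norm_eq_abs, abs_le]
    constructor <;> nlinarith [h.1, h.2]
  have bddB : ∀ (c : EuclideanSpace ℝ (Fin 3)), ‖c‖ = 1 → Integrable (pB c) μ := by
    intro c hc
    refine (integrable_const (1:ℝ)).mono' (hmB c).aestronglyMeasurable ?_
    filter_upwards with x
    have h := hB c hc x
    rw [Real.norm_eq_abs, abs_le]
    constructor <;> nlinarith [h.1, h.2]
  have bddAB : ∀ (c d : EuclideanSpace ℝ (Fin 3)), ‖c‖ = 1 → ‖d‖ = 1 →
      Integrable (fun x => pA c x * pB d x) μ := by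
    intro c d hc hd
    refine (integrable_const (1:ℝ)).mono' ((hmA c).mul (hmB d)).aestronglyMeasurable ?_
    filter_upwards with x
    have h1 := hA c hc x
    have h2 := hB d hd x
    have hA01 : 0 ≤ pA c x ∧ pA c x ≤ 1 := ⟨le_trans hA0 h1.1, le_trans h1.2 hA1⟩
    have hB01 : 0 ≤ pB d x ∧ pB d x ≤ 1 := ⟨le_trans hB0 h2.1, le_trans h2.2 hB1⟩
    rw [Real.norm_eq_abs, abs_le]
    constructor <;> nlinarith [hA01.1, hA01.2, hB01.1, hB01.2]
  have key : ∀ x, pA a x * pB b x - pA a x * pB b' x + pA a' x * pB b x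
      + pA a' x * pB b' x - t * pA a' x - s * pB b x + (s * t - |αa * αb|) / 2 ≤ 0 := by
    intro x
    have hab : |αa * αb| = |αa| * |αb| := abs_mul _ _
    rw [hab]
    exact ch_pointwise s t |αa| |αb| (pA a x) (pA a' x) (pB b x) (pB b' x)
      (hA a ha x).1 (hA a ha x).2 (hA a' ha' x).1 (hA a' ha' x).2
      (hB b hb x).1 (hB b hb x).2 (hB b' hb' x).1 (hB b' hb' x).2
  have I1 := bddAB a b ha hb
  have I2 := bddAB a b' ha hb'
  have I3 := bddAB a' b ha' hb
  have I4 := bddAB a' b' ha' hb'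
  have I5 := (bddA a' ha').const_mul t
  have I6 := (bddB b hb).const_mul s
  have hint : (∫ x, (pA a x * pB b x - pA a x * pB b' x + pA a' x * pB b x
      + pA a' x * pB b' x - t * pA a' x - s * pB b x + (s * t - |αa * αb|) / 2) ∂μ) ≤ 0 :=
    integral_nonpos key
  have heq : (∫ x, (pA a x * pB b x - pA a x * pB b' x + pA a' x * pB b x
      + pA a' x * pB b' x - t * pA a' x - s * pB b x + (s * t - |αa * αb|) / 2) ∂μ)
      = (∫ x, pA a x * pB b x ∂μ) - (∫ x, pA a x * pB b' x ∂μ)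
      + (∫ x, pA a' x * pB b x ∂μ) + (∫ x, pA a' x * pB b' x ∂μ)
      - t * (∫ x, pA a' x ∂μ) - s * (∫ x, pB b x ∂μ) + (s * t - |αa * αb|) / 2 := by
    have J1 : Integrable (fun x => pA a x * pB b x - pA a x * pB b' x) μ := I1.sub I2
    have J2 : Integrable (fun x => pA a x * pB b x - pA a x * pB b' x
        + pA a' x * pB b x) μ := J1.add I3
    have J3 : Integrable (fun x => pA a x * pB b x - pA a x * pB b' x
        + pA a' x * pB b x + pA a' x * pB b' x) μ := J2.add I4
    have J4 : Integrable (fun x => pA a x * pB b x - pA a x * pB b' x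
        + pA a' x * pB b x + pA a' x * pB b' x - t * pA a' x) μ := J3.sub I5
    have J5 : Integrable (fun x => pA a x * pB b x - pA a x * pB b' x
        + pA a' x * pB b x + pA a' x * pB b' x - t * pA a' x - s * pB b x) μ := J4.sub I6
    rw [integral_add J5 (integrable_const _), integral_sub J4 I6, integral_sub J3 I5,
        integral_add J2 I4, integral_add J1 I3, integral_sub I1 I2,
        integral_const_mul, integral_const_mul, integral_const]
    simp
  rw [heq] at hint
  exact hint

end
end

section
/- (Proposition 3, Leggett inequality for biased unsharp measurements.) Let F be a probability measure on S² × S² (pairs λ = (u, v) of unit polarization vectors), let η_b, α_b be real numbers, and suppose that for each λ there are measurable functions Ā_λ(a), B̄_λ(b), and C_λ(a, b) with |C_λ(a,b)| ≤ 1, satisfying the Leggett-model constraints: B̄_λ(b) = η_b + α_b·(v·b) for all unit b, and |Ā_λ(a) + B̄_λ(b)| ≤ 1 + C_λ(a, b) and |Ā_λ(a) − B̄_λ(b)| ≤ 1 − C_λ(a, b) for all unit a, b. Define E(a, b) := ∫ C_λ(a, b) dF(λ). Let φ ∈ [0, π], and for i = 1, 2, 3 let a_i, b_i, b_i' be unit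 vectors in ℝ³ such that each pair b_i, b_i' subtends angle φ (i.e. b_i·b_i' = cos φ) and the three difference vectors b_1 − b_1', b_2 − b_2', b_3 − b_3' are mutually orthogonal. Then (1/3)·Σ_{i=1}^{3} |E(a_i, b_i) + E(a_i, b_i')| + (2|α_b|/3)·|sin(φ/2)| ≤ 2. -/
open scoped RealInnerProductSpace
open MeasureTheory

noncomputable section

/-- The unit sphere S² ⊆ ℝ³. -/
abbrev Sph := Metric.sphere (0 : EuclideanSpace ℝ (Fin 3)) 1

lemma leggett_key (A B B' C C' : ℝ) (h1 : |A+B| ≤ 1+C) (h2 : |A-B| ≤ 1-C)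
    (h3 : |A+B'| ≤ 1+C') (h4 : |A-B'| ≤ 1-C') : |C+C'| ≤ 2 - |B-B'| := by
  rw [abs_le] at h1 h2 h3 h4
  rcases abs_cases (B - B') with ⟨h,_⟩|⟨h,_⟩ <;> rw [abs_le] <;> constructor <;> linarith

lemma leggett_geo (v : EuclideanSpace ℝ (Fin 3)) (hv : ‖v‖ = 1)
    (d : Fin 3 → EuclideanSpace ℝ (Fin 3))
    (s : ℝ) (hs : 0 < s) (hnorm : ∀ i, ‖d i‖ = s)
    (horth : ∀ i j, i ≠ j → ⟪d i, d j⟫ = 0) :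
    s ≤ ∑ i : Fin 3, |⟪v, d i⟫| := by
  set e : Fin 3 → EuclideanSpace ℝ (Fin 3) := fun i => s⁻¹ • d i with he
  have hne : ∀ i, ‖e i‖ = 1 := by
    intro i
    rw [he]; simp only [norm_smul, hnorm, Real.norm_eq_abs, abs_inv, abs_of_pos hs]
    field_simp
  have hon : Orthonormal ℝ e := by
    rw [orthonormal_iff_ite]
    intro i j
    have h : ⟪e i, e j⟫ = s⁻¹ * (s⁻¹ * ⟪d i, d j⟫) := by
      show ⟪s⁻¹ • d i, s⁻¹ • d j⟫ = _
      rw [real_inner_smul_left, real_inner_smul_right]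
    rw [h]
    by_cases hij : i = j
    · subst hij
      rw [real_inner_self_eq_norm_sq, hnorm, if_pos rfl]
      field_simp
    · rw [horth i j hij]; simp [hij]
  have hcard : Fintype.card (Fin 3) = Module.finrank ℝ (EuclideanSpace ℝ (Fin 3)) := by simp
  let bb := basisOfOrthonormalOfCardEqFinrank hon hcard
  have hbb : ⇑bb = e := coe_basisOfOrthonormalOfCardEqFinrank hon hcard
  let ob := bb.toOrthonormalBasis (by rw [hbb]; exact hon)
  have hob : ⇑ob = e := by
    rw [Module.Basis.coe_toOrthonormalBasis, hbb]
  have parseval : ∑ i : Fin 3, ⟪v, e i⟫ ^ 2 = 1 := by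
    have h := ob.sum_inner_mul_inner v v
    rw [real_inner_self_eq_norm_sq, hv] at h
    calc ∑ i : Fin 3, ⟪v, e i⟫ ^ 2 = ∑ i : Fin 3, ⟪v, ob i⟫ * ⟪ob i, v⟫ := by
          refine Finset.sum_congr rfl fun i _ => ?_
          rw [hob, sq, real_inner_comm (e i) v]
      _ = 1 := by rw [h]; norm_num
  have habs : ∀ i, |⟪v, e i⟫| ≤ 1 := fun i => by
    calc |⟪v, e i⟫| ≤ ‖v‖ * ‖e i‖ := abs_real_inner_le_norm v (e i)
      _ = 1 := by rw [hv, hne]; ring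
  have hsum : (1:ℝ) ≤ ∑ i : Fin 3, |⟪v, e i⟫| := by
    rw [← parseval]
    refine Finset.sum_le_sum fun i _ => ?_
    rw [← sq_abs]
    nlinarith [abs_nonneg ⟪v, e i⟫, habs i]
  have hd : ∀ i, ⟪v, d i⟫ = s * ⟪v, e i⟫ := by
    intro i
    show _ = s * ⟪v, s⁻¹ • d i⟫
    rw [real_inner_smul_right]
    field_simp
  calc s = s * 1 := by ring
    _ ≤ s * ∑ i : Fin 3, |⟪v, e i⟫| := by nlinarith
    _ = ∑ i : Fin 3, |⟪v, d i⟫| := by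
        rw [Finset.mul_sum]
        refine Finset.sum_congr rfl fun i _ => ?_
        rw [hd, abs_mul, abs_of_pos hs]

theorem stmt_6 (F : Measure (Sph × Sph)) [IsProbabilityMeasure F] (ηb αb : ℝ)
    (A B : Sph × Sph → EuclideanSpace ℝ (Fin 3) → ℝ)
    (C : Sph × Sph → EuclideanSpace ℝ (Fin 3) → EuclideanSpace ℝ (Fin 3) → ℝ)
    (hCbound : ∀ l a b, ‖a‖ = 1 → ‖b‖ = 1 → |C l a b| ≤ 1)
    (hMalus : ∀ (l : Sph × Sph) (b : EuclideanSpace ℝ (Fin 3)), ‖b‖ = 1 →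
      B l b = ηb + αb * ⟪(l.2 : EuclideanSpace ℝ (Fin 3)), b⟫)
    (hplus : ∀ l a b, ‖a‖ = 1 → ‖b‖ = 1 → |A l a + B l b| ≤ 1 + C l a b)
    (hminus : ∀ l a b, ‖a‖ = 1 → ‖b‖ = 1 → |A l a - B l b| ≤ 1 - C l a b)
    (hmA : ∀ a, Measurable (fun l => A l a))
    (hmB : ∀ b, Measurable (fun l => B l b))
    (hmC : ∀ a b, Measurable (fun l => C l a b))
    (φ : ℝ) (hφ : φ ∈ Set.Icc 0 Real.pi)
    (a b b' : Fin 3 → EuclideanSpace ℝ (Fin 3))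
    (ha : ∀ i, ‖a i‖ = 1) (hb : ∀ i, ‖b i‖ = 1) (hb' : ∀ i, ‖b' i‖ = 1)
    (hangle : ∀ i, ⟪b i, b' i⟫ = Real.cos φ)
    (horth : ∀ i j, i ≠ j → ⟪b i - b' i, b j - b' j⟫ = 0) :
    (1/3 : ℝ) * ∑ i : Fin 3, |(∫ l, C l (a i) (b i) ∂F) + (∫ l, C l (a i) (b' i) ∂F)|
      + (2 * |αb| / 3) * |Real.sin (φ / 2)| ≤ 2 := by
  set d : Fin 3 → EuclideanSpace ℝ (Fin 3) := fun i => b i - b' i with hd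
  set s : ℝ := 2 * |Real.sin (φ / 2)| with hsdef
  have hs0 : 0 ≤ s := by positivity
  -- norm of d i
  have hdn : ∀ i, ‖d i‖ = s := by
    intro i
    have hsq : ‖d i‖ ^ 2 = s ^ 2 := by
      have h1 : ‖d i‖ ^ 2 = ‖b i‖ ^ 2 - 2 * ⟪b i, b' i⟫ + ‖b' i‖ ^ 2 :=
        norm_sub_sq_real (b i) (b' i)
      have h2 : Real.sin (φ / 2) ^ 2 = (1 - Real.cos φ) / 2 := by
        have hc := Real.cos_sq (φ / 2)
        have hsc := Real.sin_sq_add_cos_sq (φ / 2)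
        rw [show 2 * (φ / 2) = φ by ring] at hc
        linarith
      rw [h1, hb i, hb' i, hangle i, hsdef, mul_pow, sq_abs, h2]
      ring
    calc ‖d i‖ = Real.sqrt (‖d i‖ ^ 2) := (Real.sqrt_sq (norm_nonneg _)).symm
      _ = Real.sqrt (s ^ 2) := by rw [hsq]
      _ = s := Real.sqrt_sq hs0
  -- integrability of C
  have hInt : ∀ (x y : EuclideanSpace ℝ (Fin 3)), ‖x‖ = 1 → ‖y‖ = 1 →
      Integrable (fun l => C l x y) F := by
    intro x y hx hy
    refine ⟨(hmC x y).aestronglyMeasurable, ?_⟩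
    apply MeasureTheory.HasFiniteIntegral.of_bounded (C := 1)
    filter_upwards with l
    rw [Real.norm_eq_abs]
    exact hCbound l x y hx hy
  -- the functions g i
  set g : Fin 3 → Sph × Sph → ℝ := fun i l => |⟪(l.2 : EuclideanSpace ℝ (Fin 3)), d i⟫| with hg
  have hgc : ∀ i, Continuous (g i) := by
    intro i
    apply Continuous.abs
    exact Continuous.inner (continuous_subtype_val.comp continuous_snd) continuous_const
  have hgb : ∀ i l, g i l ≤ s := by
    intro i l
    have hv : ‖(l.2 : EuclideanSpace ℝ (Fin 3))‖ = 1 := by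
      have := l.2.2
      simpa [mem_sphere_zero_iff_norm] using this
    calc g i l ≤ ‖(l.2 : EuclideanSpace ℝ (Fin 3))‖ * ‖d i‖ := abs_real_inner_le_norm _ _
      _ = s := by rw [hv, hdn]; ring
  have hgnn : ∀ i l, 0 ≤ g i l := fun i l => abs_nonneg _
  have hgInt : ∀ i, Integrable (g i) F := by
    intro i
    refine ⟨((hgc i).measurable).aestronglyMeasurable, ?_⟩
    apply MeasureTheory.HasFiniteIntegral.of_bounded (C := s)
    filter_upwards with l
    rw [Real.norm_eq_abs, abs_of_nonneg (hgnn i l)]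
    exact hgb i l
  -- key per-index bound
  have keyI : ∀ i, |(∫ l, C l (a i) (b i) ∂F) + (∫ l, C l (a i) (b' i) ∂F)|
      ≤ 2 - |αb| * ∫ l, g i l ∂F := by
    intro i
    have hint1 := hInt (a i) (b i) (ha i) (hb i)
    have hint2 := hInt (a i) (b' i) (ha i) (hb' i)
    have pointw : ∀ l, |C l (a i) (b i) + C l (a i) (b' i)| ≤ 2 - |αb| * g i l := by
      intro l
      have hB : B l (b i) - B l (b' i) = αb * ⟪(l.2 : EuclideanSpace ℝ (Fin 3)), d i⟫ := by
        rw [hMalus l (b i) (hb i), hMalus l (b' i) (hb' i)]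
        rw [show d i = b i - b' i from rfl, inner_sub_right]; ring
      have hk := leggett_key (A l (a i)) (B l (b i)) (B l (b' i))
        (C l (a i) (b i)) (C l (a i) (b' i))
        (hplus l (a i) (b i) (ha i) (hb i)) (hminus l (a i) (b i) (ha i) (hb i))
        (hplus l (a i) (b' i) (ha i) (hb' i)) (hminus l (a i) (b' i) (ha i) (hb' i))
      calc |C l (a i) (b i) + C l (a i) (b' i)| ≤ 2 - |B l (b i) - B l (b' i)| := hk
        _ = 2 - |αb| * g i l := by rw [hB, abs_mul]
    have hIntRHS : Integrable (fun l => 2 - |αb| * g i l) F :=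
      (integrable_const 2).sub ((hgInt i).const_mul _)
    calc |(∫ l, C l (a i) (b i) ∂F) + (∫ l, C l (a i) (b' i) ∂F)|
        = |∫ l, (C l (a i) (b i) + C l (a i) (b' i)) ∂F| := by
          rw [integral_add hint1 hint2]
      _ ≤ ∫ l, |C l (a i) (b i) + C l (a i) (b' i)| ∂F := by
          simpa [Real.norm_eq_abs] using
            norm_integral_le_integral_norm (fun l => C l (a i) (b i) + C l (a i) (b' i)) (μ := F)
      _ ≤ ∫ l, (2 - |αb| * g i l) ∂F := by
          refine integral_mono (hint1.add hint2).abs hIntRHS pointw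
      _ = 2 - |αb| * ∫ l, g i l ∂F := by
          rw [integral_sub (integrable_const 2) ((hgInt i).const_mul _),
            integral_const, integral_const_mul]
          simp
  -- geometric lower bound on the sum of integrals of g
  have hgeosum : ∀ l : Sph × Sph, s ≤ ∑ i : Fin 3, g i l := by
    intro l
    rcases eq_or_lt_of_le hs0 with hseq | hspos
    · rw [← hseq]
      exact Finset.sum_nonneg fun i _ => hgnn i l
    · have hv : ‖(l.2 : EuclideanSpace ℝ (Fin 3))‖ = 1 := by
        have := l.2.2
        simpa [mem_sphere_zero_iff_norm] using this
      exact leggett_geo (l.2 : EuclideanSpace ℝ (Fin 3)) hv d s hspos hdn horth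
  have hsumInt : s ≤ ∑ i : Fin 3, ∫ l, g i l ∂F := by
    have h1 : ∫ l, (∑ i : Fin 3, g i l) ∂F = ∑ i : Fin 3, ∫ l, g i l ∂F :=
      integral_finset_sum _ (fun i _ => hgInt i)
    have h2 : s = ∫ _l, s ∂F := by simp
    rw [← h1, h2]
    exact integral_mono (integrable_const s)
      (integrable_finset_sum _ fun i _ => hgInt i) hgeosum
  -- final arithmetic
  have hsum3 : ∑ i : Fin 3, |(∫ l, C l (a i) (b i) ∂F) + (∫ l, C l (a i) (b' i) ∂F)|
      ≤ 6 - |αb| * ∑ i : Fin 3, ∫ l, g i l ∂F := by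
    calc ∑ i : Fin 3, |(∫ l, C l (a i) (b i) ∂F) + (∫ l, C l (a i) (b' i) ∂F)|
        ≤ ∑ i : Fin 3, (2 - |αb| * ∫ l, g i l ∂F) :=
          Finset.sum_le_sum fun i _ => keyI i
      _ = 6 - |αb| * ∑ i : Fin 3, ∫ l, g i l ∂F := by
          rw [Finset.sum_sub_distrib, ← Finset.mul_sum]
          simp; ring
  have hab : 0 ≤ |αb| := abs_nonneg _
  have hsin : 0 ≤ |Real.sin (φ / 2)| := abs_nonneg _
  have hT : 2 * |Real.sin (φ / 2)| ≤ ∑ i : Fin 3, ∫ l, g i l ∂F := hsumInt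
  nlinarith [hsum3, mul_le_mul_of_nonneg_left hT hab]

end
end

section
/- (Corollary 1.) Let α_a, α_b be nonzero real numbers and define the singlet quantum correlation with unbiased unsharp measurements E(a, b) := −α_a·α_b·(a·b) for unit vectors a, b ∈ ℝ³. Then there exist unit vectors a, a', b, b' ∈ ℝ³ such that |E(a, b) − E(a, b') + E(a', b) + E(a', b')| > 2·|α_a·α_b|; that is, the local-realism CHSH bound for unbiased unsharp measurements is violated by quantum mechanics whenever |α_a·α_b| > 0. -/
open scoped RealInnerProductSpace

noncomputable section

theorem stmt_7 (αa αb : ℝ) (hαa : αa ≠ 0) (hαb : αb ≠ 0) :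
    ∃ a a' b b' : EuclideanSpace ℝ (Fin 3),
      ‖a‖ = 1 ∧ ‖a'‖ = 1 ∧ ‖b‖ = 1 ∧ ‖b'‖ = 1 ∧
      |(-(αa * αb * ⟪a, b⟫)) - (-(αa * αb * ⟪a, b'⟫))
          + (-(αa * αb * ⟪a', b⟫)) + (-(αa * αb * ⟪a', b'⟫))|
        > 2 * |αa * αb| := by
  set s : ℝ := Real.sqrt 2 / 2 with hs
  have hs2 : s ^ 2 = 1 / 2 := by
    rw [hs, div_pow, Real.sq_sqrt (by norm_num : (0:ℝ) ≤ 2)]; norm_num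
  have hspos : 0 < s := by positivity
  let a : EuclideanSpace ℝ (Fin 3) := !₂[1, 0, 0]
  let a' : EuclideanSpace ℝ (Fin 3) := !₂[0, 1, 0]
  let b : EuclideanSpace ℝ (Fin 3) := !₂[s, s, 0]
  let b' : EuclideanSpace ℝ (Fin 3) := !₂[-s, s, 0]
  refine ⟨a, a', b, b', ?_, ?_, ?_, ?_, ?_⟩
  · rw [EuclideanSpace.norm_eq]
    simp [a, Fin.sum_univ_three]
  · rw [EuclideanSpace.norm_eq]
    simp [a', Fin.sum_univ_three]
  · rw [EuclideanSpace.norm_eq]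
    simp only [b, Fin.sum_univ_three, Matrix.cons_val_zero, Matrix.cons_val_one,
      Matrix.head_cons, Matrix.cons_val_two, Matrix.tail_cons, Real.norm_eq_abs]
    rw [show |s|^2 + |s|^2 + |(0:ℝ)|^2 = 1 by
      rw [sq_abs, sq_abs, hs2]; norm_num]
    exact Real.sqrt_one
  · rw [EuclideanSpace.norm_eq]
    simp only [b', Fin.sum_univ_three, Matrix.cons_val_zero, Matrix.cons_val_one,
      Matrix.head_cons, Matrix.cons_val_two, Matrix.tail_cons, Real.norm_eq_abs]
    rw [show |(-s)|^2 + |s|^2 + |(0:ℝ)|^2 = 1 by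
      rw [abs_neg, sq_abs, sq_abs, hs2]; norm_num]
    exact Real.sqrt_one
  · have h1 : ⟪a, b⟫ = s := by
      simp [a, b, PiLp.inner_apply, Fin.sum_univ_three]
    have h2 : ⟪a, b'⟫ = -s := by
      simp [a, b', PiLp.inner_apply, Fin.sum_univ_three]
    have h3 : ⟪a', b⟫ = s := by
      simp [a', b, PiLp.inner_apply, Fin.sum_univ_three]
    have h4 : ⟪a', b'⟫ = s := by
      simp [a', b', PiLp.inner_apply, Fin.sum_univ_three]
    rw [h1, h2, h3, h4]
    have heq : (-(αa * αb * s)) - (-(αa * αb * (-s))) + (-(αa * αb * s)) + (-(αa * αb * s))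
        = -(4 * s) * (αa * αb) := by ring
    rw [heq, abs_mul, abs_neg]
    have habs : |4 * s| = 4 * s := abs_of_pos (by positivity)
    rw [habs]
    have hab : 0 < |αa * αb| := abs_pos.mpr (mul_ne_zero hαa hαb)
    have h4s : (2:ℝ) < 4 * s := by nlinarith [hs2, hspos]
    nlinarith

end
end

section
/- The supremum over unit vectors a, a', b, b' ∈ ℝ³ of the quantity |a·b − a·b' + a'·b + a'·b'| equals 2√2, and this supremum is attained. -/
open scoped RealInnerProductSpace

noncomputable section

theorem stmt_8 :
    IsGreatest
      {x : ℝ | ∃ a a' b b' : EuclideanSpace ℝ (Fin 3),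
        ‖a‖ = 1 ∧ ‖a'‖ = 1 ∧ ‖b‖ = 1 ∧ ‖b'‖ = 1 ∧
        x = |⟪a, b⟫ - ⟪a, b'⟫ + ⟪a', b⟫ + ⟪a', b'⟫|}
      (2 * Real.sqrt 2) := by
  have hs : Real.sqrt 2 ^ 2 = 2 := Real.sq_sqrt (by norm_num)
  have hs0 : (0:ℝ) < Real.sqrt 2 := Real.sqrt_pos.mpr (by norm_num)
  constructor
  · -- attained
    set s := Real.sqrt 2
    refine ⟨(WithLp.equiv 2 _).symm ![1,0,0], (WithLp.equiv 2 _).symm ![0,1,0],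
      (WithLp.equiv 2 _).symm ![1/s,1/s,0], (WithLp.equiv 2 _).symm ![-(1/s),1/s,0],
      ?_, ?_, ?_, ?_, ?_⟩
    · simp [EuclideanSpace.norm_eq, Fin.sum_univ_three]
    · simp [EuclideanSpace.norm_eq, Fin.sum_univ_three]
    · rw [EuclideanSpace.norm_eq]
      simp only [WithLp.equiv_symm_apply, PiLp.toLp_apply, Fin.sum_univ_three]
      rw [show (‖(![1/s,1/s,0] : Fin 3 → ℝ) 0‖^2 + ‖(![1/s,1/s,0] : Fin 3 → ℝ) 1‖^2
          + ‖(![1/s,1/s,0] : Fin 3 → ℝ) 2‖^2) = 1 by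
        show ‖1/s‖^2 + ‖1/s‖^2 + ‖(0:ℝ)‖^2 = 1
        rw [Real.norm_eq_abs, norm_zero, sq_abs]
        field_simp
        nlinarith [hs]]
      exact Real.sqrt_one
    · rw [EuclideanSpace.norm_eq]
      simp only [WithLp.equiv_symm_apply, PiLp.toLp_apply, Fin.sum_univ_three]
      rw [show (‖(![-(1/s),1/s,0] : Fin 3 → ℝ) 0‖^2 + ‖(![-(1/s),1/s,0] : Fin 3 → ℝ) 1‖^2
          + ‖(![-(1/s),1/s,0] : Fin 3 → ℝ) 2‖^2) = 1 by
        show ‖-(1/s)‖^2 + ‖1/s‖^2 + ‖(0:ℝ)‖^2 = 1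
        rw [norm_neg, Real.norm_eq_abs, norm_zero, sq_abs]
        field_simp
        nlinarith [hs]]
      exact Real.sqrt_one
    · simp only [PiLp.inner_apply, RCLike.inner_apply, conj_trivial,
        WithLp.equiv_symm_apply, PiLp.toLp_apply, Fin.sum_univ_three]
      simp only [Matrix.cons_val_zero, Matrix.cons_val_one, Matrix.head_cons,
        Matrix.cons_val_two, Matrix.tail_cons]
      ring_nf
      rw [abs_of_nonneg (by positivity)]
      field_simp
      nlinarith [hs]
  · -- upper bound
    rintro x ⟨a, a', b, b', ha, ha', hb, hb', rfl⟩
    have key : ⟪a, b⟫ - ⟪a, b'⟫ + ⟪a', b⟫ + ⟪a', b'⟫ = ⟪a, b - b'⟫ + ⟪a', b + b'⟫ := by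
      rw [inner_sub_right, inner_add_right]; ring
    rw [key]
    have h1 : |⟪a, b - b'⟫| ≤ ‖b - b'‖ := by
      have := abs_real_inner_le_norm a (b - b')
      rwa [ha, one_mul] at this
    have h2 : |⟪a', b + b'⟫| ≤ ‖b + b'‖ := by
      have := abs_real_inner_le_norm a' (b + b')
      rwa [ha', one_mul] at this
    have hpar : ‖b + b'‖ * ‖b + b'‖ + ‖b - b'‖ * ‖b - b'‖ = 2 * (‖b‖ * ‖b‖ + ‖b'‖ * ‖b'‖) :=
      by simpa only [sq] using parallelogram_law_with_norm ℝ b b'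
    rw [hb, hb'] at hpar
    have hsum : ‖b - b'‖ + ‖b + b'‖ ≤ 2 * Real.sqrt 2 := by
      nlinarith [norm_nonneg (b - b'), norm_nonneg (b + b'), hs, hs0,
        sq_nonneg (‖b - b'‖ - ‖b + b'‖), sq_nonneg (‖b - b'‖ + ‖b + b'‖ - 2 * Real.sqrt 2)]
    calc |⟪a, b - b'⟫ + ⟪a', b + b'⟫| ≤ |⟪a, b - b'⟫| + |⟪a', b + b'⟫| := abs_add_le _ _
      _ ≤ ‖b - b'‖ + ‖b + b'‖ := add_le_add h1 h2
      _ ≤ 2 * Real.sqrt 2 := hsum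

end
end

section
/- (Corollary 2.) Let α_a, α_b be real numbers with α_a²·α_b² + α_b²/9 > 1. Then there exists an angle φ ∈ (0, π) such that 2·|α_a·α_b|·cos(φ/2) + (2·|α_b|/3)·sin(φ/2) > 2. Conversely, if α_a²·α_b² + α_b²/9 ≤ 1, then 2·|α_a·α_b|·cos(φ/2) + (2·|α_b|/3)·sin(φ/2) ≤ 2 for every φ ∈ [0, π]. Hence the Leggett inequality for unbiased unsharp measurements can be violated by the quantum singlet-state predictions if and only if (α_a² + 1/9)·α_b² > 1. -/
noncomputable section

set_option maxHeartbeats 1600000 in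
theorem stmt_9 (αa αb : ℝ) :
    (αa ^ 2 * αb ^ 2 + αb ^ 2 / 9 > 1 →
      ∃ φ ∈ Set.Ioo (0 : ℝ) Real.pi,
        2 * |αa * αb| * Real.cos (φ / 2) + 2 * |αb| / 3 * Real.sin (φ / 2) > 2) ∧
    (αa ^ 2 * αb ^ 2 + αb ^ 2 / 9 ≤ 1 →
      ∀ φ ∈ Set.Icc (0 : ℝ) Real.pi,
        2 * |αa * αb| * Real.cos (φ / 2) + 2 * |αb| / 3 * Real.sin (φ / 2) ≤ 2) := by
  set A : ℝ := 2 * |αa * αb| with hA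
  set B : ℝ := 2 * |αb| / 3 with hB
  have hA0 : 0 ≤ A := by positivity
  have hB0 : 0 ≤ B := by positivity
  have hAsq : A ^ 2 = 4 * (αa ^ 2 * αb ^ 2) := by
    rw [hA]; rw [mul_pow, sq_abs, mul_pow]; ring
  have hBsq : B ^ 2 = 4 * (αb ^ 2 / 9) := by
    rw [hB, div_pow, mul_pow, sq_abs]; ring
  clear_value A B
  constructor
  · intro h
    have hkey : A ^ 2 + B ^ 2 > 4 := by rw [hAsq, hBsq]; linarith
    by_cases hAz : A = 0
    · -- B > 2
      have hB2 : B > 2 := by nlinarith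
      set s : ℝ := (1 + 2 / B) / 2 with hs
      have h2B : 2 / B < 1 := by
        rw [div_lt_one (by linarith)]; linarith
      have hs0 : 0 < s := by positivity
      have hs1 : s < 1 := by rw [hs]; linarith
      refine ⟨2 * Real.arcsin s, ⟨?_, ?_⟩, ?_⟩
      · have := Real.arcsin_pos.mpr hs0; linarith
      · have : Real.arcsin s < Real.pi / 2 := Real.arcsin_lt_pi_div_two.mpr hs1
        linarith
      · have hdiv : 2 * Real.arcsin s / 2 = Real.arcsin s := by ring
        rw [hdiv, Real.sin_arcsin (by linarith) (by linarith), hAz]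
        have hcos : 0 ≤ Real.cos (Real.arcsin s) := Real.cos_arcsin s ▸ Real.sqrt_nonneg _
        have : B * s = (B + 2) / 2 := by
          rw [hs]; field_simp
        nlinarith
    · have hApos : 0 < A := lt_of_le_of_ne hA0 (Ne.symm hAz)
      set C : ℝ := Real.sqrt (A ^ 2 + B ^ 2) with hC
      have hC2 : C > 2 := by
        have : (2:ℝ) = Real.sqrt 4 := by
          rw [show (4:ℝ) = 2^2 by norm_num, Real.sqrt_sq (by norm_num)]
        rw [this, hC]
        exact Real.sqrt_lt_sqrt (by norm_num) hkey
      have hCpos : 0 < C := by linarith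
      have hCsq : C ^ 2 = A ^ 2 + B ^ 2 := Real.sq_sqrt (by positivity)
      clear_value C
      set x : ℝ := A / C with hx
      have hx0 : 0 < x := by positivity
      have hBpos : 0 < B := by
        rcases eq_or_ne αb 0 with hb | hb
        · exfalso; rw [hb] at h; nlinarith
        · rw [hB]; positivity
      have hx1 : x < 1 := by
        rw [hx, div_lt_one hCpos]
        nlinarith [mul_pos hBpos hBpos]
      refine ⟨2 * Real.arccos x, ⟨?_, ?_⟩, ?_⟩
      · have := Real.arccos_pos.mpr hx1; linarith
      · have : Real.arccos x < Real.pi / 2 := Real.arccos_lt_pi_div_two.mpr hx0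
        linarith
      · have hdiv : 2 * Real.arccos x / 2 = Real.arccos x := by ring
        rw [hdiv, Real.cos_arccos (by linarith) (by linarith), Real.sin_arccos]
        have hsin : Real.sqrt (1 - x ^ 2) = B / C := by
          have h1 : 1 - x ^ 2 = (B / C) ^ 2 := by
            rw [hx]; field_simp; nlinarith
          rw [h1, Real.sqrt_sq (by positivity)]
        rw [hsin, hx]
        rw [gt_iff_lt, show A * (A / C) + B * (B / C) = (A^2 + B^2) / C by ring,
          lt_div_iff₀ hCpos]
        nlinarith
  · intro h φ hφ
    obtain ⟨hφ1, hφ2⟩ := hφ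
    have hkey : A ^ 2 + B ^ 2 ≤ 4 := by rw [hAsq, hBsq]; linarith
    have hpi : (0:ℝ) < Real.pi := Real.pi_pos
    have hc : 0 ≤ Real.cos (φ / 2) :=
      Real.cos_nonneg_of_mem_Icc ⟨by linarith, by linarith⟩
    have hsn : 0 ≤ Real.sin (φ / 2) :=
      Real.sin_nonneg_of_nonneg_of_le_pi (by linarith) (by linarith)
    have hsc : Real.sin (φ/2) ^ 2 + Real.cos (φ/2) ^ 2 = 1 := Real.sin_sq_add_cos_sq _
    set c := Real.cos (φ/2)
    set s := Real.sin (φ/2)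
    clear_value c s
    have hX0 : 0 ≤ A * c + B * s := by positivity
    have hCS : (A * c + B * s) ^ 2 ≤ 4 := by nlinarith [sq_nonneg (A * s - B * c)]
    nlinarith [hCS, hX0]

end
end

section
/- Let S, P be complex numbers not both zero, let n be a unit vector in ℝ³, and define the Kraus operators M_±(n) := (S·I ± P·(σ·n)) / √(2(|S|² + |P|²)) acting on ℂ². Then M₊(n)†M₊(n) = (I + α σ·n)/2 and M₋(n)†M₋(n) = (I − α σ·n)/2, where α = (S̄·P + S·P̄)/(|S|² + |P|²) = 2Re(S̄P)/(|S|² + |P|²); in particular M₊(n)†M₊(n) + M₋(n)†M₋(n) = I, so these operators realize an unbiased unsharp POVM measurement of spin along n with unsharpness parameter α. -/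
open scoped Matrix

noncomputable section

/-- The Pauli matrix σx. -/
def σx : Matrix (Fin 2) (Fin 2) ℂ := !![0, 1; 1, 0]

/-- The Pauli matrix σy. -/
def σy : Matrix (Fin 2) (Fin 2) ℂ := !![0, -Complex.I; Complex.I, 0]

/-- The Pauli matrix σz. -/
def σz : Matrix (Fin 2) (Fin 2) ℂ := !![1, 0; 0, -1]

/-- σ·v for v ∈ ℝ³. -/
def pauliDot (v : EuclideanSpace ℝ (Fin 3)) : Matrix (Fin 2) (Fin 2) ℂ :=
  (v 0 : ℂ) • σx + (v 1 : ℂ) • σy + (v 2 : ℂ) • σz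

/-- The Kraus operators M_±(n) = (S·I ± P·(σ·n)) / √(2(|S|² + |P|²)) for the hyperon
weak-decay measurement. -/
def kraus (S P : ℂ) (s : ℝ) (n : EuclideanSpace ℝ (Fin 3)) : Matrix (Fin 2) (Fin 2) ℂ :=
  ((Real.sqrt (2 * (Complex.normSq S + Complex.normSq P)) : ℂ))⁻¹ •
    (S • (1 : Matrix (Fin 2) (Fin 2) ℂ) + (s : ℂ) • (P • pauliDot n))


lemma pauliDot_herm (v : EuclideanSpace ℝ (Fin 3)) : (pauliDot v)ᴴ = pauliDot v := by
  ext i j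
  fin_cases i <;> fin_cases j <;>
    simp [pauliDot, σx, σy, σz, Matrix.conjTranspose_apply]

lemma pauliDot_sq (n : EuclideanSpace ℝ (Fin 3)) (hn : ‖n‖ = 1) :
    pauliDot n * pauliDot n = 1 := by
  have h : (n 0)^2 + (n 1)^2 + (n 2)^2 = 1 := by
    have h1 := congrArg (·^2) (EuclideanSpace.norm_eq n ▸ hn)
    simp only [Real.sq_sqrt (by positivity : (0:ℝ) ≤ ∑ i : Fin 3, ‖n i‖^2)] at h1
    simpa [Fin.sum_univ_three, Real.norm_eq_abs, sq_abs] using h1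
  have hC : ((n 0 : ℂ))^2 + (n 1 : ℂ)^2 + (n 2 : ℂ)^2 = 1 := by
    have h' := congrArg (fun x : ℝ => (x : ℂ)) h
    simpa using h'
  ext i j
  fin_cases i <;> fin_cases j <;>
      simp [pauliDot, σx, σy, σz, Matrix.mul_apply, Fin.sum_univ_two, Matrix.one_apply] <;>
      ring_nf
  all_goals linear_combination hC - (n 1:ℂ)^2 * Complex.I_sq

lemma key (S P : ℂ) (hSP : ¬(S = 0 ∧ P = 0)) (s : ℝ) (hs : (s:ℂ) * (s:ℂ) = 1)
    (n : EuclideanSpace ℝ (Fin 3)) (hn : ‖n‖ = 1)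
    (α : ℝ) (hα : α = 2 * (starRingEnd ℂ S * P).re / (Complex.normSq S + Complex.normSq P)) :
    (kraus S P s n)ᴴ * kraus S P s n
      = (1/2 : ℂ) • ((1 : Matrix (Fin 2) (Fin 2) ℂ) + ((s:ℂ) * (α : ℂ)) • pauliDot n) := by
  set t := Complex.normSq S + Complex.normSq P with ht
  have htpos : 0 < t := by
    rcases not_and_or.mp hSP with h | h
    · have := Complex.normSq_pos.mpr h
      have := Complex.normSq_nonneg P
      positivity
    · have := Complex.normSq_pos.mpr h
      have := Complex.normSq_nonneg S
      positivity
  simp only [kraus, Matrix.conjTranspose_smul, Matrix.conjTranspose_add,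
    Matrix.conjTranspose_one, pauliDot_herm, star_inv₀, Complex.star_def,
    Complex.conj_ofReal, Matrix.smul_mul, Matrix.mul_smul, Matrix.add_mul,
    Matrix.mul_add, Matrix.one_mul, Matrix.mul_one, pauliDot_sq n hn,
    smul_smul, smul_add, map_mul, map_inv₀]
  generalize hcdef : ((Real.sqrt (2 * (Complex.normSq S + Complex.normSq P)) : ℝ) : ℂ) = c
  have hc2 : c * c = 2 * (t:ℂ) := by
    rw [← hcdef]
    have := Real.mul_self_sqrt (by positivity : (0:ℝ) ≤ 2*t)
    exact_mod_cast this
  have hc0 : c ≠ 0 := by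
    rw [← hcdef]
    simpa using (by positivity : Real.sqrt (2*t) ≠ 0)
  have hc2' := hc2
  rw [ht] at hc2'
  push_cast at hc2'
  have hS : S * (starRingEnd ℂ) S = (Complex.normSq S : ℂ) := Complex.mul_conj S
  have hP : P * (starRingEnd ℂ) P = (Complex.normSq P : ℂ) := Complex.mul_conj P
  have ht0 : (t:ℂ) ≠ 0 := by exact_mod_cast htpos.ne'
  have hre : (starRingEnd ℂ) S * P + S * (starRingEnd ℂ) P
      = 2 * (((starRingEnd ℂ) S * P).re : ℂ) := by
    have := Complex.add_conj ((starRingEnd ℂ) S * P)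
    simpa [map_mul] using this
  have hαC : (α:ℂ) * t = (starRingEnd ℂ) S * P + S * (starRingEnd ℂ) P := by
    rw [hα]; push_cast; rw [hre]; field_simp
  match_scalars
  · field_simp
    linear_combination 2*hS + 2*(P*(starRingEnd ℂ) P)*hs + 2*hP - hc2'
  · field_simp
    linear_combination -2*(s:ℂ)*hαC - (s:ℂ)*(α:ℂ)*hc2

theorem stmt_11 (S P : ℂ) (hSP : ¬(S = 0 ∧ P = 0))
    (n : EuclideanSpace ℝ (Fin 3)) (hn : ‖n‖ = 1)
    (α : ℝ) (hα : α = 2 * (starRingEnd ℂ S * P).re / (Complex.normSq S + Complex.normSq P)) :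
    (kraus S P 1 n)ᴴ * kraus S P 1 n
        = (1/2 : ℂ) • ((1 : Matrix (Fin 2) (Fin 2) ℂ) + (α : ℂ) • pauliDot n) ∧
    (kraus S P (-1) n)ᴴ * kraus S P (-1) n
        = (1/2 : ℂ) • ((1 : Matrix (Fin 2) (Fin 2) ℂ) - (α : ℂ) • pauliDot n) ∧
    (kraus S P 1 n)ᴴ * kraus S P 1 n + (kraus S P (-1) n)ᴴ * kraus S P (-1) n = 1 := by
  have h1 := key S P hSP 1 (by norm_num) n hn α hα
  have h2 := key S P hSP (-1) (by norm_num) n hn α hα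
  have h1' : (kraus S P 1 n)ᴴ * kraus S P 1 n
      = (1/2 : ℂ) • ((1 : Matrix (Fin 2) (Fin 2) ℂ) + (α : ℂ) • pauliDot n) := by
    rw [h1]; norm_num
  have h2' : (kraus S P (-1) n)ᴴ * kraus S P (-1) n
      = (1/2 : ℂ) • ((1 : Matrix (Fin 2) (Fin 2) ℂ) - (α : ℂ) • pauliDot n) := by
    rw [h2]; push_cast
    rw [sub_eq_add_neg, ← neg_smul]
    ring_nf
  refine ⟨h1', h2', ?_⟩
  rw [h1', h2']
  module


end
end

section
/- Let Ā, B̄, B̄', C, C' be real numbers satisfying |Ā + B̄| ≤ 1 + C, |Ā + B̄'| ≤ 1 + C', |Ā − B̄| ≤ 1 − C, and |Ā − B̄'| ≤ 1 − C'. Then |C + C'| ≤ 2 − |B̄ − B̄'| and |C − C'| ≤ 2 − |B̄ + B̄'|. -/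
theorem stmt_14 (A B B' C C' : ℝ)
    (h1 : |A + B| ≤ 1 + C) (h2 : |A + B'| ≤ 1 + C')
    (h3 : |A - B| ≤ 1 - C) (h4 : |A - B'| ≤ 1 - C') :
    |C + C'| ≤ 2 - |B - B'| ∧ |C - C'| ≤ 2 - |B + B'| := by
  rw [abs_le] at h1 h2 h3 h4
  rcases abs_cases (B - B') with ⟨e1, _⟩ | ⟨e1, _⟩ <;>
  rcases abs_cases (B + B') with ⟨e2, _⟩ | ⟨e2, _⟩ <;>
  constructor <;> rw [abs_le] <;> simp only [e1, e2] <;> constructor <;> linarith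
end

section
/- Let F be a probability measure on S² × S² (pairs λ = (u, v) of unit polarization vectors), let η_b, α_b be real numbers, and suppose that for each λ there are measurable functions Ā_λ(a), B̄_λ(b), and C_λ(a, b) with |C_λ(a,b)| ≤ 1, satisfying: B̄_λ(b) = η_b + α_b·(v·b) for all unit b, and |Ā_λ(a) ± B̄_λ(b)| ≤ 1 ± C_λ(a, b) for all unit a, b. Define E(a, b) := ∫ C_λ(a, b) dF(λ). Then for all unit vectors a, b, b' ∈ ℝ³: |E(a, b) + E(a, b')| ≤ 2 − |α_b|·∫_{S²×S²} |v·(b − b')| dF(u, v). -/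
open scoped RealInnerProductSpace
open MeasureTheory

noncomputable section

theorem stmt_15 (F : Measure (Sph × Sph)) [IsProbabilityMeasure F] (ηb αb : ℝ)
    (A B : Sph × Sph → EuclideanSpace ℝ (Fin 3) → ℝ)
    (C : Sph × Sph → EuclideanSpace ℝ (Fin 3) → EuclideanSpace ℝ (Fin 3) → ℝ)
    (hCbound : ∀ l a b, ‖a‖ = 1 → ‖b‖ = 1 → |C l a b| ≤ 1)
    (hMalus : ∀ (l : Sph × Sph) (b : EuclideanSpace ℝ (Fin 3)), ‖b‖ = 1 →
      B l b = ηb + αb * ⟪(l.2 : EuclideanSpace ℝ (Fin 3)), b⟫)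
    (hplus : ∀ l a b, ‖a‖ = 1 → ‖b‖ = 1 → |A l a + B l b| ≤ 1 + C l a b)
    (hminus : ∀ l a b, ‖a‖ = 1 → ‖b‖ = 1 → |A l a - B l b| ≤ 1 - C l a b)
    (hmA : ∀ a, Measurable (fun l => A l a))
    (hmB : ∀ b, Measurable (fun l => B l b))
    (hmC : ∀ a b, Measurable (fun l => C l a b))
    (a b b' : EuclideanSpace ℝ (Fin 3)) (ha : ‖a‖ = 1) (hb : ‖b‖ = 1) (hb' : ‖b'‖ = 1) :
    |(∫ l, C l a b ∂F) + (∫ l, C l a b' ∂F)|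
      ≤ 2 - |αb| * ∫ l : Sph × Sph, |⟪(l.2 : EuclideanSpace ℝ (Fin 3)), b - b'⟫| ∂F := by
  -- integrability facts
  have hi1 : Integrable (fun l => C l a b) F :=
    (integrable_const (1 : ℝ)).mono' (hmC a b).aestronglyMeasurable
      (ae_of_all _ fun l => by simpa [Real.norm_eq_abs] using hCbound l a b ha hb)
  have hi2 : Integrable (fun l => C l a b') F :=
    (integrable_const (1 : ℝ)).mono' (hmC a b').aestronglyMeasurable
      (ae_of_all _ fun l => by simpa [Real.norm_eq_abs] using hCbound l a b' ha hb')
  have hgc : Continuous (fun l : Sph × Sph => |⟪(l.2 : EuclideanSpace ℝ (Fin 3)), b - b'⟫|) := by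
    exact ((continuous_subtype_val.comp continuous_snd).inner continuous_const).abs
  have hig : Integrable (fun l : Sph × Sph => |⟪(l.2 : EuclideanSpace ℝ (Fin 3)), b - b'⟫|) F :=
    (integrable_const (2 : ℝ)).mono' hgc.aestronglyMeasurable
      (ae_of_all _ fun l => by
        have h1 := abs_real_inner_le_norm ((l.2 : EuclideanSpace ℝ (Fin 3))) (b - b')
        have h2 : ‖(l.2 : EuclideanSpace ℝ (Fin 3))‖ = 1 := by
          simpa using mem_sphere_zero_iff_norm.mp l.2.2
        have h3 : ‖b - b'‖ ≤ 2 := by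
          calc ‖b - b'‖ ≤ ‖b‖ + ‖b'‖ := norm_sub_le _ _
          _ = 2 := by rw [hb, hb']; norm_num
        have : |⟪(l.2 : EuclideanSpace ℝ (Fin 3)), b - b'⟫| ≤ 2 := by
          nlinarith [abs_nonneg (⟪(l.2 : EuclideanSpace ℝ (Fin 3)), b - b'⟫)]
        simpa [Real.norm_eq_abs, abs_abs] using this)
  -- pointwise bound
  have hpoint : ∀ l : Sph × Sph, |C l a b + C l a b'|
      ≤ 2 - |αb| * |⟪(l.2 : EuclideanSpace ℝ (Fin 3)), b - b'⟫| := by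
    intro l
    set x := A l a
    set y := B l b with hy
    set z := B l b' with hz
    have hyz : |y - z| = |αb| * |⟪(l.2 : EuclideanSpace ℝ (Fin 3)), b - b'⟫| := by
      rw [hy, hz, hMalus l b hb, hMalus l b' hb', inner_sub_right]
      rw [← abs_mul]
      ring_nf
    have h1 := hplus l a b ha hb
    have h2 := hplus l a b' ha hb'
    have h3 := hminus l a b ha hb
    have h4 := hminus l a b' ha hb'
    have t1 : |y - z| ≤ |x - y| + |x - z| := by
      have := abs_sub_le y x z
      have hc : |y - x| = |x - y| := abs_sub_comm y x
      linarith
    have t2 : |y - z| ≤ |x + y| + |x + z| := by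
      have := abs_sub_le y (-x) z
      have e1 : |y - -x| = |x + y| := by rw [sub_neg_eq_add, add_comm]
      have e2 : |(-x) - z| = |x + z| := by rw [← abs_neg]; ring_nf
      linarith
    rw [← hyz, abs_le]
    constructor <;> linarith
  have hisum := hi1.add hi2
  have hib : Integrable (fun l : Sph × Sph =>
      2 - |αb| * |⟪(l.2 : EuclideanSpace ℝ (Fin 3)), b - b'⟫|) F :=
    (integrable_const 2).sub (hig.const_mul _)
  calc |(∫ l, C l a b ∂F) + (∫ l, C l a b' ∂F)|
      = |∫ l, (C l a b + C l a b') ∂F| := by rw [integral_add hi1 hi2]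
    _ ≤ ∫ l, |C l a b + C l a b'| ∂F := by simpa [Real.norm_eq_abs] using norm_integral_le_integral_norm (μ := F) (fun l => C l a b + C l a b')
    _ ≤ ∫ l : Sph × Sph, (2 - |αb| * |⟪(l.2 : EuclideanSpace ℝ (Fin 3)), b - b'⟫|) ∂F :=
        integral_mono hisum.abs hib hpoint
    _ = 2 - |αb| * ∫ l : Sph × Sph, |⟪(l.2 : EuclideanSpace ℝ (Fin 3)), b - b'⟫| ∂F := by
        rw [integral_sub (integrable_const 2) (hig.const_mul _), integral_const,
          integral_const_mul]
        simp

end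
end

section
/- Let F be a probability measure on S² × S², let α_b be a real number, and suppose the Leggett model with unbiased Bob marginal holds: for each λ = (u, v) there are functions Ā_λ(a), B̄_λ(b) = α_b·(v·b), and C_λ(a, b) ∈ [−1, 1] with |Ā_λ(a) ± B̄_λ(b)| ≤ 1 ± C_λ(a, b) for all unit a, b; define E(a, b) := ∫ C_λ(a, b) dF(λ). Let φ ∈ [0, π] and for i = 1, 2, 3 let a_i, b_i, b_i' be unit vectors such that b_i·b_i' = cos φ for each i and the three sum vectors b_1 + b_1', b_2 + b_2', b_3 + b_3' are mutually orthogonal. Then (1/3)·Σ_{i=1}^{3} |E(a_i, b_i) − E(a_i, b_i')| ≤ 2 − (2|α_b|/3)·|cos(φ/2)|. -/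
open scoped RealInnerProductSpace
open MeasureTheory

noncomputable section

theorem stmt_16 (F : Measure (Sph × Sph)) [IsProbabilityMeasure F] (αb : ℝ)
    (A B : Sph × Sph → EuclideanSpace ℝ (Fin 3) → ℝ)
    (C : Sph × Sph → EuclideanSpace ℝ (Fin 3) → EuclideanSpace ℝ (Fin 3) → ℝ)
    (hCbound : ∀ l a b, ‖a‖ = 1 → ‖b‖ = 1 → |C l a b| ≤ 1)
    (hMalus : ∀ (l : Sph × Sph) (b : EuclideanSpace ℝ (Fin 3)), ‖b‖ = 1 →
      B l b = αb * ⟪(l.2 : EuclideanSpace ℝ (Fin 3)), b⟫)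
    (hplus : ∀ l a b, ‖a‖ = 1 → ‖b‖ = 1 → |A l a + B l b| ≤ 1 + C l a b)
    (hminus : ∀ l a b, ‖a‖ = 1 → ‖b‖ = 1 → |A l a - B l b| ≤ 1 - C l a b)
    (hmA : ∀ a, Measurable (fun l => A l a))
    (hmB : ∀ b, Measurable (fun l => B l b))
    (hmC : ∀ a b, Measurable (fun l => C l a b))
    (φ : ℝ) (hφ : φ ∈ Set.Icc 0 Real.pi)
    (a b b' : Fin 3 → EuclideanSpace ℝ (Fin 3))
    (ha : ∀ i, ‖a i‖ = 1) (hb : ∀ i, ‖b i‖ = 1) (hb' : ∀ i, ‖b' i‖ = 1)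
    (hangle : ∀ i, ⟪b i, b' i⟫ = Real.cos φ)
    (horth : ∀ i j, i ≠ j → ⟪b i + b' i, b j + b' j⟫ = 0) :
    (1/3 : ℝ) * ∑ i : Fin 3, |(∫ l, C l (a i) (b i) ∂F) - (∫ l, C l (a i) (b' i) ∂F)|
      ≤ 2 - (2 * |αb| / 3) * |Real.cos (φ / 2)| := by
  set c : ℝ := Real.cos (φ / 2) with hc
  have hc0 : 0 ≤ c := Real.cos_nonneg_of_mem_Icc
    ⟨by linarith [hφ.1, Real.pi_pos], by linarith [hφ.2]⟩
  have habs : |Real.cos (φ / 2)| = c := abs_of_nonneg hc0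
  -- norm of the sum vectors
  have hw : ∀ i, ‖b i + b' i‖ = 2 * c := by
    intro i
    have h1 : ‖b i + b' i‖ ^ 2 = (2 * c) ^ 2 := by
      rw [norm_add_sq_real, hb i, hb' i, hangle i]
      have h2 := Real.cos_sq (φ/2)
      rw [show 2*(φ/2) = φ by ring] at h2
      nlinarith
    calc ‖b i + b' i‖ = Real.sqrt (‖b i + b' i‖ ^ 2) :=
          (Real.sqrt_sq (norm_nonneg _)).symm
      _ = Real.sqrt ((2 * c) ^ 2) := by rw [h1]
      _ = 2 * c := Real.sqrt_sq (by linarith)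
  -- pointwise Leggett bound
  have key : ∀ (l : Sph × Sph) (i : Fin 3),
      |C l (a i) (b i) - C l (a i) (b' i)|
        ≤ 2 - |αb| * |⟪(l.2 : EuclideanSpace ℝ (Fin 3)), b i + b' i⟫| := by
    intro l i
    have hB1 := hMalus l (b i) (hb i)
    have hB2 := hMalus l (b' i) (hb' i)
    have h1 := hplus l (a i) (b i) (ha i) (hb i)
    have h2 := hminus l (a i) (b i) (ha i) (hb i)
    have h3 := hplus l (a i) (b' i) (ha i) (hb' i)
    have h4 := hminus l (a i) (b' i) (ha i) (hb' i)
    have hsum : |αb| * |⟪(l.2 : EuclideanSpace ℝ (Fin 3)), b i + b' i⟫|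
        = |B l (b i) + B l (b' i)| := by
      rw [hB1, hB2, inner_add_right, ← abs_mul]
      ring_nf
    rw [hsum]
    have u1 : |B l (b i) + B l (b' i)|
        ≤ |A l (a i) - B l (b i)| + |A l (a i) + B l (b' i)| := by
      have e : B l (b i) + B l (b' i)
          = (A l (a i) + B l (b' i)) - (A l (a i) - B l (b i)) := by ring
      rw [e, add_comm]
      exact (abs_sub _ _).trans (by rw [abs_sub_comm] at *; exact le_of_eq (by rw [add_comm]))
    have u2 : |B l (b i) + B l (b' i)|
        ≤ |A l (a i) - B l (b' i)| + |A l (a i) + B l (b i)| := by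
      have e : B l (b i) + B l (b' i)
          = (A l (a i) + B l (b i)) - (A l (a i) - B l (b' i)) := by ring
      rw [e, add_comm]
      exact (abs_sub _ _).trans (le_of_eq (by rw [add_comm]))
    rw [abs_sub_le_iff]
    constructor <;> linarith
  -- pointwise Parseval bound on the sphere
  have sphere_bd : ∀ v : Sph,
      2 * c ≤ ∑ i : Fin 3, |⟪(v : EuclideanSpace ℝ (Fin 3)), b i + b' i⟫| := by
    intro v
    rcases eq_or_lt_of_le hc0 with h0 | hcpos
    · have : (2 : ℝ) * c = 0 := by rw [← h0]; ring
      rw [this]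
      positivity
    · set e : Fin 3 → EuclideanSpace ℝ (Fin 3) := fun i => (2 * c)⁻¹ • (b i + b' i) with he
      have hcne : (2 * c) ≠ 0 := by positivity
      have hortho : Orthonormal ℝ e := by
        rw [orthonormal_iff_ite]
        intro i j
        by_cases hij : i = j
        · subst hij
          simp only [he, real_inner_smul_left, real_inner_smul_right, if_pos rfl, if_true]
          rw [real_inner_self_eq_norm_sq, hw i]
          field_simp
        · simp only [he, real_inner_smul_left, real_inner_smul_right, if_neg hij,
            horth i j hij, mul_zero]
      have hcard : Fintype.card (Fin 3) = Module.finrank ℝ (EuclideanSpace ℝ (Fin 3)) := by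
        rw [finrank_euclideanSpace]
      set bas := basisOfOrthonormalOfCardEqFinrank hortho hcard with hbas
      have hbe : ⇑bas = e := coe_basisOfOrthonormalOfCardEqFinrank hortho hcard
      have hortho' : Orthonormal ℝ bas := by rwa [hbe]
      set ob := bas.toOrthonormalBasis hortho' with hob
      have hobe : ∀ i, ob i = e i := by
        intro i
        rw [hob, Module.Basis.coe_toOrthonormalBasis, hbe]
      have parseval : ∑ i : Fin 3, ⟪(v : EuclideanSpace ℝ (Fin 3)), e i⟫ ^ 2 = 1 := by
        have := ob.sum_inner_mul_inner (v : EuclideanSpace ℝ (Fin 3)) (v : EuclideanSpace ℝ (Fin 3))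
        have hv : ⟪(v : EuclideanSpace ℝ (Fin 3)), (v : EuclideanSpace ℝ (Fin 3))⟫ = 1 := by
          rw [real_inner_self_eq_norm_sq]
          have : ‖(v : EuclideanSpace ℝ (Fin 3))‖ = 1 := by
            simpa using mem_sphere_zero_iff_norm.mp v.2
          rw [this]; norm_num
        rw [hv] at this
        rw [← this]
        apply Finset.sum_congr rfl
        intro i _
        rw [hobe i, real_inner_comm (e i)]
        ring
      have sum_abs : 1 ≤ ∑ i : Fin 3, |⟪(v : EuclideanSpace ℝ (Fin 3)), e i⟫| := by
        have hnn : ∀ i ∈ Finset.univ, (0:ℝ) ≤ |⟪(v : EuclideanSpace ℝ (Fin 3)), e i⟫| :=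
          fun i _ => abs_nonneg _
        have hsq := Finset.sum_sq_le_sq_sum_of_nonneg hnn
        have : ∑ i : Fin 3, |⟪(v : EuclideanSpace ℝ (Fin 3)), e i⟫| ^ 2 = 1 := by
          rw [← parseval]
          exact Finset.sum_congr rfl fun i _ => sq_abs _
        rw [this] at hsq
        nlinarith [Finset.sum_nonneg hnn]
      calc (2 : ℝ) * c = (2 * c) * 1 := by ring
        _ ≤ (2 * c) * ∑ i : Fin 3, |⟪(v : EuclideanSpace ℝ (Fin 3)), e i⟫| := by
            apply mul_le_mul_of_nonneg_left sum_abs (by positivity)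
        _ = ∑ i : Fin 3, |⟪(v : EuclideanSpace ℝ (Fin 3)), b i + b' i⟫| := by
            rw [Finset.mul_sum]
            apply Finset.sum_congr rfl
            intro i _
            rw [he]
            simp only [real_inner_smul_right]
            rw [abs_mul, abs_inv, abs_of_pos (by positivity : (0:ℝ) < 2 * c)]
            field_simp
  -- integrability facts
  have hintC : ∀ (x y : EuclideanSpace ℝ (Fin 3)), ‖x‖ = 1 → ‖y‖ = 1 →
      Integrable (fun l => C l x y) F := by
    intro x y hx hy
    refine ⟨(hmC x y).aestronglyMeasurable, ?_⟩
    exact HasFiniteIntegral.of_bounded (C := 1) (ae_of_all _ fun l => by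
      simpa using hCbound l x y hx hy)
  have hcontInner : ∀ w : EuclideanSpace ℝ (Fin 3),
      Continuous (fun l : Sph × Sph => |⟪(l.2 : EuclideanSpace ℝ (Fin 3)), w⟫|) := by
    intro w
    apply Continuous.abs
    exact Continuous.inner (continuous_subtype_val.comp continuous_snd) continuous_const
  have hintInner : ∀ w : EuclideanSpace ℝ (Fin 3),
      Integrable (fun l : Sph × Sph => |⟪(l.2 : EuclideanSpace ℝ (Fin 3)), w⟫|) F := by
    intro w
    refine ⟨(hcontInner w).measurable.aestronglyMeasurable, ?_⟩
    apply HasFiniteIntegral.of_bounded (C := ‖w‖)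
    apply ae_of_all _
    intro l
    have h1 : ‖(l.2 : EuclideanSpace ℝ (Fin 3))‖ = 1 := by
      simpa using mem_sphere_zero_iff_norm.mp l.2.2
    calc ‖|⟪(l.2 : EuclideanSpace ℝ (Fin 3)), w⟫|‖ = |⟪(l.2 : EuclideanSpace ℝ (Fin 3)), w⟫| := by
          rw [Real.norm_eq_abs, abs_abs]
      _ ≤ ‖(l.2 : EuclideanSpace ℝ (Fin 3))‖ * ‖w‖ := abs_real_inner_le_norm _ _
      _ = ‖w‖ := by rw [h1, one_mul]
  -- per-i integral bound
  have Ibd : ∀ i : Fin 3,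
      |(∫ l, C l (a i) (b i) ∂F) - (∫ l, C l (a i) (b' i) ∂F)|
        ≤ 2 - |αb| * ∫ l, |⟪((l : Sph × Sph).2 : EuclideanSpace ℝ (Fin 3)), b i + b' i⟫| ∂F := by
    intro i
    have hi1 := hintC (a i) (b i) (ha i) (hb i)
    have hi2 := hintC (a i) (b' i) (ha i) (hb' i)
    have hih := hintInner (b i + b' i)
    have step1 : |(∫ l, C l (a i) (b i) ∂F) - (∫ l, C l (a i) (b' i) ∂F)|
        ≤ ∫ l, |C l (a i) (b i) - C l (a i) (b' i)| ∂F := by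
      rw [← integral_sub hi1 hi2]
      simpa [Real.norm_eq_abs] using
        norm_integral_le_integral_norm (fun l => C l (a i) (b i) - C l (a i) (b' i)) (μ := F)
    have step2 : ∫ l, |C l (a i) (b i) - C l (a i) (b' i)| ∂F
        ≤ ∫ l, (2 - |αb| * |⟪((l : Sph × Sph).2 : EuclideanSpace ℝ (Fin 3)), b i + b' i⟫|) ∂F := by
      apply integral_mono (hi1.sub hi2).abs ((integrable_const 2).sub (hih.const_mul |αb|))
      intro l
      exact key l i
    have step3 : ∫ l, (2 - |αb| * |⟪((l : Sph × Sph).2 : EuclideanSpace ℝ (Fin 3)), b i + b' i⟫|) ∂F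
        = 2 - |αb| * ∫ l, |⟪((l : Sph × Sph).2 : EuclideanSpace ℝ (Fin 3)), b i + b' i⟫| ∂F := by
      rw [integral_sub (integrable_const 2) (hih.const_mul |αb|), integral_const,
        integral_const_mul]
      simp
    linarith [step1.trans (step2.trans_eq step3)]
  -- integral of the sphere bound
  have Isum : 2 * c ≤ ∑ i : Fin 3,
      ∫ l, |⟪((l : Sph × Sph).2 : EuclideanSpace ℝ (Fin 3)), b i + b' i⟫| ∂F := by
    have h1 : ∑ i : Fin 3,
        ∫ l, |⟪((l : Sph × Sph).2 : EuclideanSpace ℝ (Fin 3)), b i + b' i⟫| ∂F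
        = ∫ l, ∑ i : Fin 3, |⟪((l : Sph × Sph).2 : EuclideanSpace ℝ (Fin 3)), b i + b' i⟫| ∂F := by
      rw [integral_finset_sum]
      intro i _
      exact hintInner (b i + b' i)
    rw [h1]
    have h2 : (2 : ℝ) * c = ∫ _ : Sph × Sph, (2 * c) ∂F := by simp
    rw [h2]
    apply integral_mono (integrable_const _)
      (integrable_finset_sum _ fun i _ => hintInner (b i + b' i))
    intro l
    exact sphere_bd l.2
  -- assemble
  have total : ∑ i : Fin 3, |(∫ l, C l (a i) (b i) ∂F) - (∫ l, C l (a i) (b' i) ∂F)|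
      ≤ 6 - |αb| * (2 * c) := by
    calc ∑ i : Fin 3, |(∫ l, C l (a i) (b i) ∂F) - (∫ l, C l (a i) (b' i) ∂F)|
        ≤ ∑ i : Fin 3, (2 - |αb| *
            ∫ l, |⟪((l : Sph × Sph).2 : EuclideanSpace ℝ (Fin 3)), b i + b' i⟫| ∂F) :=
          Finset.sum_le_sum fun i _ => Ibd i
      _ = 6 - |αb| * ∑ i : Fin 3,
            ∫ l, |⟪((l : Sph × Sph).2 : EuclideanSpace ℝ (Fin 3)), b i + b' i⟫| ∂F := by
          rw [Finset.sum_sub_distrib, ← Finset.mul_sum]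
          norm_num
      _ ≤ 6 - |αb| * (2 * c) := by
          have := mul_le_mul_of_nonneg_left Isum (abs_nonneg αb)
          linarith
  rw [habs]
  linarith
end
end
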